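/- Let d ∈ ℕ, let ν be a Lévy measure on ℝ, let G ∈ L¹_loc(ℝ^d), let 0 < r < R, and assume that ∫_{|ρ|>1} |ρ| (∫_{1/|ρ|}^∞ d_{G_R}(α) λ¹(dα)) ν(dρ) < ∞ and ∫_{|ρ|>1} |ρ|² (∫_0^{1/|ρ|} α·d_{G_R}(α) λ¹(dα)) ν(dρ) < ∞, where G_R(x) := ∫_{B_R(x)} |G(y)| λ^d(dy). Let (φ_n) be a sequence of bounded measurable functions on ℝ^d with φ_n(y) = 0 for ‖y‖ ≥ r, ‖φ_n‖_∞ → 0, and ‖G*φ_n‖_{L²(ℝ^d)} → 0 as n → ∞. Then ∫_{ℝ^d} ∫_ℝ |ρ·(φ_n*G)(x)| · 𝟙_{|ρ(φ_n*G)(x)| > 1} ν(dρ) λ^d(dx) → 0 as n → ∞. -/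

import Mathlib

open MeasureTheory ENNReal Filter Topology

noncomputable section

/-- `ℝ^d` with the Euclidean structure. -/
abbrev Rd (d : ℕ) := EuclideanSpace ℝ (Fin d)

/-- The distribution function `d_f(α) = λ^d {x : |f x| > α}`. -/
def distFun {d : ℕ} (f : Rd d → ℝ) (α : ℝ) : ℝ≥0∞ := volume {x | α < |f x|}

/-- The convolution `(φ * G)(x) = ∫ G(y) φ(x - y) dy`. -/
def conv {d : ℕ} (φ G : Rd d → ℝ) (x : Rd d) : ℝ := ∫ y, G y * φ (x - y)

/-- `G_R(x) = ∫_{B_R(x)} |G(y)| dy`. -/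
def ballInt {d : ℕ} (G : Rd d → ℝ) (R : ℝ) (x : Rd d) : ℝ := ∫ y in Metric.ball x R, |G y|

set_option maxHeartbeats 1000000

variable {X : Type*} [MeasurableSpace X]

lemma aux_layer1 (μ : Measure X) [SFinite μ] {f : X → ℝ} (hf : Measurable f) (c : ℝ) :
    ∫⁻ x, ENNReal.ofReal (f x - c) ∂μ = ∫⁻ α in Set.Ioi c, μ {x | α < f x} := by
  set k : X → ℝ → ℝ≥0∞ := fun x α =>
    Set.indicator {p : X × ℝ | p.2 < f p.1} (fun _ => 1) (x, α) with hk
  have hset : MeasurableSet {p : X × ℝ | p.2 < f p.1} :=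
    measurableSet_lt measurable_snd (hf.comp measurable_fst)
  have hkm : Measurable (Function.uncurry k) := by
    have : Function.uncurry k = Set.indicator {p : X × ℝ | p.2 < f p.1} (fun _ => 1) := rfl
    rw [this]
    exact measurable_const.indicator hset
  have h1 : ∀ x, ∫⁻ α in Set.Ioi c, k x α = ENNReal.ofReal (f x - c) := by
    intro x
    have : k x = Set.indicator (Set.Iio (f x)) (fun _ => 1) := by
      ext α
      simp [hk, Set.indicator_apply, Set.mem_setOf_eq, Set.mem_Iio]
    rw [this, lintegral_indicator measurableSet_Iio _, setLIntegral_one,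
      Measure.restrict_apply measurableSet_Iio, Set.Iio_inter_Ioi, Real.volume_Ioo]
  have h2 : ∀ α, ∫⁻ x, k x α ∂μ = μ {x | α < f x} := by
    intro α
    have : (fun x => k x α) = Set.indicator {x | α < f x} (fun _ => 1) := by
      ext x
      simp [hk, Set.indicator_apply, Set.mem_setOf_eq]
    rw [this, lintegral_indicator (measurableSet_lt measurable_const hf) _, setLIntegral_one]
  calc ∫⁻ x, ENNReal.ofReal (f x - c) ∂μ = ∫⁻ x, (∫⁻ α in Set.Ioi c, k x α) ∂μ := by
        simp_rw [h1]
    _ = ∫⁻ α in Set.Ioi c, ∫⁻ x, k x α ∂μ := lintegral_lintegral_swap hkm.aemeasurable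
    _ = ∫⁻ α in Set.Ioi c, μ {x | α < f x} := by simp_rw [h2]

lemma aux_layer2 (μ : Measure X) {f : X → ℝ} {c : ℝ} (hc : 0 < c) :
    ENNReal.ofReal (c ^ 2 / 2) * μ {x | c < f x} ≤
      ∫⁻ α in Set.Ioc (0 : ℝ) c, ENNReal.ofReal α * μ {x | α < f x} := by
  have key : ∫⁻ α in Set.Ioc (0 : ℝ) c, ENNReal.ofReal α * μ {x | c < f x} ≤
      ∫⁻ α in Set.Ioc (0 : ℝ) c, ENNReal.ofReal α * μ {x | α < f x} := by
    refine setLIntegral_mono' measurableSet_Ioc fun α hα => ?_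
    exact mul_le_mul' le_rfl (measure_mono fun x hx => lt_of_le_of_lt hα.2 hx)
  refine le_trans (le_of_eq ?_) key
  rw [lintegral_mul_const _ ENNReal.measurable_ofReal]
  congr 1
  rw [← ofReal_integral_eq_lintegral_ofReal]
  · congr 1
    rw [← intervalIntegral.integral_of_le hc.le, integral_id]
    ring
  · exact (intervalIntegral.intervalIntegrable_id.1 : IntegrableOn id (Set.Ioc 0 c) volume)
  · exact (ae_restrict_iff' measurableSet_Ioc).2 (.of_forall fun α hα => hα.1.le)

/-- under conditions (wiesonur1) and (wiesonur2) on the Lévy measure `ν`,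
and if additionally `‖G*φ_n‖_{L²} → 0` and `‖φ_n‖_∞ → 0`, the big-jump integrals
of `φ_n * G` tend to `0`. -/
theorem statement4 {d : ℕ} (hd : 0 < d) (ν : Measure ℝ)
    (hν0 : ν {0} = 0)
    (hνlevy : ∫⁻ ρ, ENNReal.ofReal (min 1 (ρ ^ 2)) ∂ν < ⊤)
    (G : Rd d → ℝ) (hG : MeasureTheory.LocallyIntegrable G volume)
    (r R : ℝ) (hr : 0 < r) (hrR : r < R)
    (h1 : ∫⁻ ρ in {ρ : ℝ | 1 < |ρ|},
        (ENNReal.ofReal |ρ| * ∫⁻ α in Set.Ioi (1 / |ρ|),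
          distFun (ballInt G R) α) ∂ν < ⊤)
    (h2 : ∫⁻ ρ in {ρ : ℝ | 1 < |ρ|},
        (ENNReal.ofReal (|ρ| ^ 2) * ∫⁻ α in Set.Ioc (0 : ℝ) (1 / |ρ|),
          ENNReal.ofReal α * distFun (ballInt G R) α) ∂ν < ⊤)
    (φ : ℕ → Rd d → ℝ)
    (hφm : ∀ n, Measurable (φ n))
    (hφb : ∀ n, BddAbove (Set.range fun y => |φ n y|))
    (hφs : ∀ n, ∀ y : Rd d, r ≤ ‖y‖ → φ n y = 0)
    (hφ0 : Tendsto (fun n => ⨆ y, |φ n y|) atTop (𝓝 (0 : ℝ)))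
    (hL2 : Tendsto (fun n => eLpNorm (conv (φ n) G) 2 volume) atTop (𝓝 (0 : ℝ≥0∞))) :
    Tendsto (fun n => ∫⁻ x, ∫⁻ ρ,
        ENNReal.ofReal (if 1 < |ρ * conv (φ n) G x| then |ρ * conv (φ n) G x| else 0) ∂ν)
      atTop (𝓝 (0 : ℝ≥0∞)) := by
  classical
  -- notation
  set GR : Rd d → ℝ := ballInt G R with hGRdef
  set M : ℕ → ℝ := fun n => ⨆ y, |φ n y| with hMdef
  set s : Set ℝ := {ρ : ℝ | 1 < |ρ|} with hsdef
  have hs : MeasurableSet s := measurableSet_lt measurable_const continuous_abs.measurable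
  -- basic facts about G and GR
  have hGball : ∀ (x : Rd d) (t : ℝ), IntegrableOn G (Metric.ball x t) volume := fun x t =>
    (hG.integrableOn_isCompact (isCompact_closedBall x t)).mono_set Metric.ball_subset_closedBall
  have hGR0 : ∀ x, 0 ≤ GR x := fun x => integral_nonneg fun y => abs_nonneg _
  have hballr0 : ∀ x, 0 ≤ ballInt G r x := fun x => integral_nonneg fun y => abs_nonneg _
  have hrleR : ∀ x, ballInt G r x ≤ GR x := fun x =>
    setIntegral_mono_set (hGball x R).abs (.of_forall fun y => abs_nonneg _)
      (HasSubset.Subset.eventuallyLE (Metric.ball_subset_ball hrR.le))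
  -- measurability of GR
  have hGsm : AEStronglyMeasurable G volume := hG.aestronglyMeasurable
  obtain ⟨g, hgm, hGg⟩ : ∃ g : Rd d → ℝ, Measurable g ∧ G =ᵐ[volume] g :=
    ⟨hGsm.aemeasurable.mk G, hGsm.aemeasurable.measurable_mk, hGsm.aemeasurable.ae_eq_mk⟩
  have hGRmeas : Measurable GR := by
    have hS : MeasurableSet {p : Rd d × Rd d | dist p.2 p.1 < R} :=
      (isOpen_lt (continuous_snd.dist continuous_fst) continuous_const).measurableSet
    have hFm : Measurable fun p : Rd d × Rd d =>
        Set.indicator {p : Rd d × Rd d | dist p.2 p.1 < R}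
          (fun p => (‖g p.2‖₊ : ℝ≥0∞)) p :=
      ((measurable_nnnorm.comp (hgm.comp measurable_snd)).coe_nnreal_ennreal).indicator hS
    have hΛm : Measurable fun x => ∫⁻ y in Metric.ball x R, (‖g y‖₊ : ℝ≥0∞) := by
      have heq : (fun x => ∫⁻ y in Metric.ball x R, (‖g y‖₊ : ℝ≥0∞)) =
          fun x => ∫⁻ y, Set.indicator {p : Rd d × Rd d | dist p.2 p.1 < R}
            (fun p => (‖g p.2‖₊ : ℝ≥0∞)) (x, y) := by
        funext x
        rw [← lintegral_indicator measurableSet_ball _]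
        refine lintegral_congr fun y => ?_
        simp [Set.indicator_apply, Metric.mem_ball, Set.mem_setOf_eq]
      rw [heq]
      exact hFm.lintegral_prod_right'
    have hGReq : GR = fun x => (∫⁻ y in Metric.ball x R, (‖g y‖₊ : ℝ≥0∞)).toReal := by
      funext x
      have hae : AEStronglyMeasurable G (volume.restrict (Metric.ball x R)) := hGsm.restrict
      have h1 : GR x = ∫ y in Metric.ball x R, ‖G y‖ := by
        simp only [hGRdef, ballInt, Real.norm_eq_abs]
      rw [h1, integral_norm_eq_lintegral_enorm hae]
      congr 1
      exact lintegral_congr_ae (ae_restrict_of_ae (hGg.mono fun y hy => by show ‖G y‖ₑ = _; rw [hy, enorm_eq_nnnorm]))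
    rw [hGReq]
    exact ENNReal.measurable_toReal.comp hΛm
  -- distFun facts
  have hdist : ∀ α, distFun (ballInt G R) α = volume {x | α < GR x} := by
    intro α
    unfold distFun
    congr 1
    ext x
    simp only [Set.mem_setOf_eq]
    rw [abs_of_nonneg (hGR0 x : 0 ≤ ballInt G R x)]
  have hdanti : Antitone fun α => volume {x | α < GR x} :=
    fun a b hab => measure_mono fun x hx => lt_of_le_of_lt hab hx
  have hdm : Measurable fun α => volume {x | α < GR x} := hdanti.measurable
  -- ν s is finite
  have hνs : ν s ≠ ⊤ := by
    have hle : ν s ≤ ∫⁻ ρ, ENNReal.ofReal (min 1 (ρ ^ 2)) ∂ν := by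
      calc ν s = ∫⁻ ρ in s, 1 ∂ν := (setLIntegral_one s).symm
        _ ≤ ∫⁻ ρ in s, ENNReal.ofReal (min 1 (ρ ^ 2)) ∂ν := by
            refine setLIntegral_mono' hs fun ρ hρ => ?_
            have h1 : (1:ℝ) ≤ ρ ^ 2 := by nlinarith [hρ.out, abs_nonneg ρ, sq_abs ρ]
            rw [min_eq_left h1, ENNReal.ofReal_one]
        _ ≤ _ := setLIntegral_le_lintegral _ _
    exact (lt_of_le_of_lt hle hνlevy).ne
  have hfinres : IsFiniteMeasure (ν.restrict s) :=
    ⟨by rw [Measure.restrict_apply_univ]; exact hνs.lt_top⟩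
  -- measurable representatives of conv (φ n) G
  have huaesm : ∀ n, AEStronglyMeasurable (conv (φ n) G) volume := by
    intro n
    have h1 : AEStronglyMeasurable (fun p : Rd d × Rd d => G p.2)
        (volume.prod volume) :=
      hGsm.comp_quasiMeasurePreserving Measure.quasiMeasurePreserving_snd
    have h2 : AEStronglyMeasurable (fun p : Rd d × Rd d => φ n (p.1 - p.2))
        (volume.prod volume) :=
      ((hφm n).comp (measurable_fst.sub measurable_snd)).aestronglyMeasurable
    exact (h1.mul h2).integral_prod_right'
  have hwex : ∀ n, ∃ w : Rd d → ℝ, Measurable w ∧ conv (φ n) G =ᵐ[volume] w := fun n =>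
    ⟨(huaesm n).aemeasurable.mk _, (huaesm n).aemeasurable.measurable_mk,
      (huaesm n).aemeasurable.ae_eq_mk⟩
  choose w hwm hweq using hwex
  -- the sup bounds
  have hφle : ∀ n y, |φ n y| ≤ M n := fun n y => le_ciSup (hφb n) y
  have hM0 : ∀ n, 0 ≤ M n := fun n => le_trans (abs_nonneg (φ n 0)) (hφle n 0)
  -- pointwise bound on conv
  have hubd : ∀ n x, |conv (φ n) G x| ≤ M n * GR x := by
    intro n x
    have key : |conv (φ n) G x| ≤ M n * ballInt G r x := by
      have hstep1 : |conv (φ n) G x| ≤ ∫ y, ‖G y * φ n (x - y)‖ := by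
        rw [show |conv (φ n) G x| = ‖conv (φ n) G x‖ from rfl]
        exact norm_integral_le_integral_norm _
      have hgint : Integrable
          (fun y => (Metric.ball x r).indicator (fun y => |G y| * M n) y) volume :=
        MeasureTheory.IntegrableOn.integrable_indicator ((hGball x r).abs.mul_const (M n)) measurableSet_ball
      have hstep2 : ∫ y, ‖G y * φ n (x - y)‖ ≤
          ∫ y, (Metric.ball x r).indicator (fun y => |G y| * M n) y := by
        refine integral_mono_of_nonneg (.of_forall fun y => norm_nonneg _) hgint
          (.of_forall fun y => ?_)
        by_cases hy : y ∈ Metric.ball x r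
        · rw [Set.indicator_of_mem hy]
          calc ‖G y * φ n (x - y)‖ = |G y| * |φ n (x - y)| := abs_mul _ _
            _ ≤ |G y| * M n := mul_le_mul_of_nonneg_left (hφle n _) (abs_nonneg _)
        · rw [Set.indicator_of_notMem hy]
          have hz : φ n (x - y) = 0 := by
            apply hφs
            have hd1 : r ≤ dist y x := not_lt.1 (Metric.mem_ball.not.1 hy)
            calc r ≤ dist y x := hd1
              _ = ‖x - y‖ := by rw [dist_eq_norm, norm_sub_rev]
          simp [hz]
      have hstep3 : ∫ y, (Metric.ball x r).indicator (fun y => |G y| * M n) y =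
          M n * ballInt G r x := by
        rw [integral_indicator measurableSet_ball, integral_mul_const]
        unfold ballInt
        ring
      linarith
    calc |conv (φ n) G x| ≤ M n * ballInt G r x := key
      _ ≤ M n * GR x := mul_le_mul_of_nonneg_left (hrleR x) (hM0 n)
  have hwbd : ∀ n, ∀ᵐ x, |w n x| ≤ M n * GR x := fun n =>
    (hweq n).mono fun x hx => hx ▸ hubd n x
  -- abbreviation F
  set F : ℝ → ℝ → ℝ≥0∞ :=
    fun ρ t => ENNReal.ofReal (if 1 < |ρ * t| then |ρ * t| else 0) with hF
  have hFm : Measurable fun p : ℝ × ℝ => F p.1 p.2 := by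
    simp only [hF]
    exact ENNReal.measurable_ofReal.comp
      (Measurable.ite
        (measurableSet_lt measurable_const (measurable_fst.mul measurable_snd).abs)
        (measurable_fst.mul measurable_snd).abs measurable_const)
  -- the dominating function H and its bound
  set H : ℝ → ℝ≥0∞ := fun ρ => ∫⁻ x, F ρ (GR x) with hH
  have hHbd : ∀ ρ : ℝ, ρ ≠ 0 → H ρ ≤
      (ENNReal.ofReal |ρ| * ∫⁻ α in Set.Ioi (1 / |ρ|), distFun (ballInt G R) α) +
        2 * (ENNReal.ofReal (|ρ| ^ 2) * ∫⁻ α in Set.Ioc (0 : ℝ) (1 / |ρ|),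
          ENNReal.ofReal α * distFun (ballInt G R) α) := by
    intro ρ hρ
    have hρpos : 0 < |ρ| := abs_pos.2 hρ
    set c : ℝ := 1 / |ρ| with hc
    have hcpos : 0 < c := by positivity
    have hpt : ∀ x, F ρ (GR x) ≤ ENNReal.ofReal (|ρ| * GR x - 1) +
        Set.indicator {x : Rd d | c < GR x} (fun _ => 1) x := by
      intro x
      simp only [hF]
      by_cases h : 1 < |ρ * GR x|
      · rw [if_pos h]
        have habs : |ρ * GR x| = |ρ| * GR x := by
          rw [abs_mul, abs_of_nonneg (hGR0 x)]
        have hmem : x ∈ {x : Rd d | c < GR x} := by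
          simp only [Set.mem_setOf_eq, hc]
          rw [habs] at h
          rw [div_lt_iff₀ hρpos]
          nlinarith
        rw [Set.indicator_of_mem hmem]
        calc ENNReal.ofReal |ρ * GR x| = ENNReal.ofReal ((|ρ| * GR x - 1) + 1) := by
              rw [habs]; ring_nf
          _ ≤ ENNReal.ofReal (|ρ| * GR x - 1) + ENNReal.ofReal 1 := ENNReal.ofReal_add_le
          _ = ENNReal.ofReal (|ρ| * GR x - 1) + 1 := by rw [ENNReal.ofReal_one]
      · rw [if_neg h, ENNReal.ofReal_zero]
        exact zero_le
    have hH1 : H ρ ≤ (∫⁻ x, ENNReal.ofReal (|ρ| * GR x - 1)) + volume {x : Rd d | c < GR x} := by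
      calc H ρ ≤ ∫⁻ x, (ENNReal.ofReal (|ρ| * GR x - 1) +
            Set.indicator {x : Rd d | c < GR x} (fun _ => 1) x) := lintegral_mono hpt
        _ = _ := by
            rw [lintegral_add_left
              (by fun_prop : Measurable fun x => ENNReal.ofReal (|ρ| * GR x - 1)),
              lintegral_indicator (measurableSet_lt measurable_const hGRmeas) _,
              setLIntegral_one]
    have e1 : (∫⁻ x, ENNReal.ofReal (|ρ| * GR x - 1)) =
        ENNReal.ofReal |ρ| * ∫⁻ α in Set.Ioi c, distFun (ballInt G R) α := by
      have hxeq : ∀ x : Rd d, ENNReal.ofReal (|ρ| * GR x - 1) =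
          ENNReal.ofReal |ρ| * ENNReal.ofReal (GR x - c) := by
        intro x
        rw [← ENNReal.ofReal_mul (abs_nonneg ρ)]
        congr 1
        rw [mul_sub, hc]
        field_simp
      simp_rw [hxeq]
      rw [lintegral_const_mul' _ _ ENNReal.ofReal_ne_top]
      congr 1
      rw [aux_layer1 volume hGRmeas c]
      refine setLIntegral_congr_fun measurableSet_Ioi (fun α _ => ?_)
      rw [hdist α]
    have e2 : volume {x : Rd d | c < GR x} ≤
        2 * (ENNReal.ofReal (|ρ| ^ 2) * ∫⁻ α in Set.Ioc (0 : ℝ) c,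
          ENNReal.ofReal α * distFun (ballInt G R) α) := by
      have hlc : ENNReal.ofReal (c ^ 2 / 2) * volume {x : Rd d | c < GR x} ≤
          ∫⁻ α in Set.Ioc (0 : ℝ) c, ENNReal.ofReal α * volume {x : Rd d | α < GR x} :=
        aux_layer2 volume hcpos
      have hne : ENNReal.ofReal (c ^ 2 / 2) ≠ 0 :=
        (ENNReal.ofReal_pos.2 (by positivity)).ne'
      have hinv : (ENNReal.ofReal (c ^ 2 / 2))⁻¹ = 2 * ENNReal.ofReal (|ρ| ^ 2) := by
        rw [← ENNReal.ofReal_inv_of_pos (by positivity)]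
        have hval : (c ^ 2 / 2)⁻¹ = 2 * |ρ| ^ 2 := by
          rw [hc]
          field_simp
        rw [hval, ENNReal.ofReal_mul (by norm_num)]
        norm_num
      calc volume {x : Rd d | c < GR x}
          = (ENNReal.ofReal (c ^ 2 / 2))⁻¹ *
            (ENNReal.ofReal (c ^ 2 / 2) * volume {x : Rd d | c < GR x}) := by
            rw [← mul_assoc, ENNReal.inv_mul_cancel hne ENNReal.ofReal_ne_top, one_mul]
        _ ≤ (ENNReal.ofReal (c ^ 2 / 2))⁻¹ *
            ∫⁻ α in Set.Ioc (0 : ℝ) c, ENNReal.ofReal α * volume {x : Rd d | α < GR x} :=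
            mul_le_mul' le_rfl hlc
        _ = 2 * (ENNReal.ofReal (|ρ| ^ 2) * ∫⁻ α in Set.Ioc (0 : ℝ) c,
            ENNReal.ofReal α * distFun (ballInt G R) α) := by
            rw [hinv, mul_assoc]
            congr 2
            refine setLIntegral_congr_fun measurableSet_Ioc (fun α _ => ?_)
            rw [hdist α]
    calc H ρ ≤ _ := hH1
      _ ≤ _ := add_le_add (le_of_eq e1) e2
  -- K is finite
  set K : ℝ≥0∞ := ∫⁻ ρ in s, H ρ ∂ν with hK
  have haeν : ∀ᵐ ρ ∂ν, ρ ≠ 0 := by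
    rw [ae_iff]
    have : {ρ : ℝ | ¬ ρ ≠ 0} = {0} := by ext ρ; simp
    rw [this]
    exact hν0
  have hKfin : K ≠ ⊤ := by
    have hm1 : Measurable fun ρ : ℝ =>
        ENNReal.ofReal |ρ| * ∫⁻ α in Set.Ioi (1 / |ρ|), distFun (ballInt G R) α := by
      refine (continuous_abs.measurable).ennreal_ofReal.mul ?_
      have heq : (fun ρ : ℝ => ∫⁻ α in Set.Ioi (1 / |ρ|), distFun (ballInt G R) α) =
          fun ρ => ∫⁻ α, Set.indicator {q : ℝ × ℝ | 1 / |q.1| < q.2}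
            (fun q => distFun (ballInt G R) q.2) (ρ, α) := by
        funext ρ
        rw [← lintegral_indicator measurableSet_Ioi _]
        refine lintegral_congr fun α => ?_
        simp [Set.indicator_apply, Set.mem_Ioi, Set.mem_setOf_eq]
      rw [heq]
      refine Measurable.lintegral_prod_right' ?_
      refine Measurable.indicator ?_ ?_
      · have : (fun q : ℝ × ℝ => distFun (ballInt G R) q.2) =
            (fun α => volume {x | α < GR x}) ∘ (fun q : ℝ × ℝ => q.2) := by
          funext q; simp only [Function.comp_apply, hdist]
        rw [this]
        exact hdm.comp measurable_snd
      · exact measurableSet_lt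
          (measurable_const.div (continuous_abs.measurable.comp measurable_fst)) measurable_snd
    have hm2 : Measurable fun ρ : ℝ =>
        ENNReal.ofReal (|ρ| ^ 2) * ∫⁻ α in Set.Ioc (0 : ℝ) (1 / |ρ|),
          ENNReal.ofReal α * distFun (ballInt G R) α := by
      refine ((continuous_abs.measurable).pow_const 2).ennreal_ofReal.mul ?_
      have heq : (fun ρ : ℝ => ∫⁻ α in Set.Ioc (0 : ℝ) (1 / |ρ|),
          ENNReal.ofReal α * distFun (ballInt G R) α) =
          fun ρ => ∫⁻ α, Set.indicator {q : ℝ × ℝ | 0 < q.2 ∧ q.2 ≤ 1 / |q.1|}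
            (fun q => ENNReal.ofReal q.2 * distFun (ballInt G R) q.2) (ρ, α) := by
        funext ρ
        rw [← lintegral_indicator measurableSet_Ioc _]
        refine lintegral_congr fun α => ?_
        simp [Set.indicator_apply, Set.mem_Ioc, Set.mem_setOf_eq]
      rw [heq]
      refine Measurable.lintegral_prod_right' ?_
      refine Measurable.indicator ?_ ?_
      · have : (fun q : ℝ × ℝ => ENNReal.ofReal q.2 * distFun (ballInt G R) q.2) =
            fun q : ℝ × ℝ => ENNReal.ofReal q.2 * volume {x | q.2 < GR x} := by
          funext q; rw [hdist]
        rw [this]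
        exact (ENNReal.measurable_ofReal.comp measurable_snd).mul (hdm.comp measurable_snd)
      · exact (measurableSet_lt measurable_const measurable_snd).inter
          (measurableSet_le measurable_snd
            (measurable_const.div (continuous_abs.measurable.comp measurable_fst)))
    have hKle : K ≤ (∫⁻ ρ in s,
        (ENNReal.ofReal |ρ| * ∫⁻ α in Set.Ioi (1 / |ρ|), distFun (ballInt G R) α) ∂ν) +
        2 * ∫⁻ ρ in s, (ENNReal.ofReal (|ρ| ^ 2) * ∫⁻ α in Set.Ioc (0 : ℝ) (1 / |ρ|),
          ENNReal.ofReal α * distFun (ballInt G R) α) ∂ν := by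
      calc K ≤ ∫⁻ ρ in s,
          ((ENNReal.ofReal |ρ| * ∫⁻ α in Set.Ioi (1 / |ρ|), distFun (ballInt G R) α) +
            2 * (ENNReal.ofReal (|ρ| ^ 2) * ∫⁻ α in Set.Ioc (0 : ℝ) (1 / |ρ|),
              ENNReal.ofReal α * distFun (ballInt G R) α)) ∂ν :=
          lintegral_mono_ae (ae_restrict_of_ae (haeν.mono fun ρ hρ => hHbd ρ hρ))
        _ = _ := by
          rw [lintegral_add_left hm1, lintegral_const_mul' _ _ (by norm_num : (2:ℝ≥0∞) ≠ ⊤)]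
    exact (lt_of_le_of_lt hKle
      (ENNReal.add_lt_top.2 ⟨h1, ENNReal.mul_lt_top (by norm_num) h2⟩)).ne
  -- the small-jump constant
  set C : ℝ≥0∞ := ∫⁻ ρ in sᶜ, ENNReal.ofReal (min 1 (ρ ^ 2)) ∂ν with hC
  have hCfin : C ≠ ⊤ := (lt_of_le_of_lt (setLIntegral_le_lintegral _ _) hνlevy).ne
  -- main estimate
  have main : ∀ n, M n ≤ 1 → (∫⁻ x, ∫⁻ ρ, F ρ (w n x) ∂ν) ≤
      ENNReal.ofReal (M n) * K + C * ∫⁻ x, ENNReal.ofReal (w n x ^ 2) := by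
    intro n hMn
    have hjm : Measurable fun p : Rd d × ℝ => F p.2 (w n p.1) :=
      hFm.comp (measurable_snd.prodMk ((hwm n).comp measurable_fst))
    have hbigm : Measurable fun x => ∫⁻ ρ in s, F ρ (w n x) ∂ν :=
      Measurable.lintegral_prod_right' (ν := ν.restrict s) hjm
    calc (∫⁻ x, ∫⁻ ρ, F ρ (w n x) ∂ν)
        = ∫⁻ x, ((∫⁻ ρ in s, F ρ (w n x) ∂ν) + ∫⁻ ρ in sᶜ, F ρ (w n x) ∂ν) :=
          lintegral_congr fun x => (lintegral_add_compl _ hs).symm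
      _ = (∫⁻ x, ∫⁻ ρ in s, F ρ (w n x) ∂ν) + ∫⁻ x, ∫⁻ ρ in sᶜ, F ρ (w n x) ∂ν :=
          lintegral_add_left hbigm _
      _ ≤ ENNReal.ofReal (M n) * K + C * ∫⁻ x, ENNReal.ofReal (w n x ^ 2) := by
          refine add_le_add ?_ ?_
          · calc (∫⁻ x, ∫⁻ ρ in s, F ρ (w n x) ∂ν)
                = ∫⁻ ρ in s, (∫⁻ x, F ρ (w n x)) ∂ν :=
                lintegral_lintegral_swap hjm.aemeasurable
              _ ≤ ∫⁻ ρ in s, ENNReal.ofReal (M n) * H ρ ∂ν := by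
                  refine lintegral_mono fun ρ => ?_
                  rw [hH, ← lintegral_const_mul' _ _ ENNReal.ofReal_ne_top]
                  refine lintegral_mono_ae ((hwbd n).mono fun x hx => ?_)
                  simp only [hF]
                  by_cases h : 1 < |ρ * w n x|
                  · rw [if_pos h]
                    have hb1 : |ρ * w n x| ≤ M n * (|ρ| * GR x) := by
                      rw [abs_mul]
                      calc |ρ| * |w n x| ≤ |ρ| * (M n * GR x) :=
                          mul_le_mul_of_nonneg_left hx (abs_nonneg ρ)
                        _ = M n * (|ρ| * GR x) := by ring
                    have hb2 : 1 < |ρ * GR x| := by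
                      rw [abs_mul, abs_of_nonneg (hGR0 x)]
                      nlinarith [mul_nonneg (abs_nonneg ρ) (hGR0 x)]
                    rw [if_pos hb2, ← ENNReal.ofReal_mul (hM0 n)]
                    refine ENNReal.ofReal_le_ofReal ?_
                    calc |ρ * w n x| ≤ M n * (|ρ| * GR x) := hb1
                      _ = M n * |ρ * GR x| := by
                          rw [abs_mul, abs_of_nonneg (hGR0 x)]
                  · rw [if_neg h, ENNReal.ofReal_zero]
                    exact zero_le
              _ = ENNReal.ofReal (M n) * K :=
                  lintegral_const_mul' _ _ ENNReal.ofReal_ne_top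
          · calc (∫⁻ x, ∫⁻ ρ in sᶜ, F ρ (w n x) ∂ν)
                ≤ ∫⁻ x, C * ENNReal.ofReal (w n x ^ 2) := by
                  refine lintegral_mono fun x => ?_
                  rw [hC, ← lintegral_mul_const _
                    (measurable_const.min (measurable_id'.pow_const 2)).ennreal_ofReal]
                  refine setLIntegral_mono' hs.compl fun ρ hρ => ?_
                  have hρ1 : |ρ| ≤ 1 := by
                    have := hρ
                    simp only [hsdef, Set.mem_compl_iff, Set.mem_setOf_eq, not_lt] at this
                    exact this
                  simp only [hF]
                  by_cases h : 1 < |ρ * w n x|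
                  · rw [if_pos h]
                    have hsq : |ρ| * |ρ| ≤ 1 := by
                      simpa using mul_le_mul hρ1 hρ1 (abs_nonneg ρ) zero_le_one
                    have hmin : min 1 (ρ ^ 2) = ρ ^ 2 :=
                      min_eq_right (by nlinarith [sq_abs ρ, hsq])
                    rw [hmin, ← ENNReal.ofReal_mul (sq_nonneg ρ)]
                    refine ENNReal.ofReal_le_ofReal ?_
                    calc |ρ * w n x| ≤ |ρ * w n x| ^ 2 := by
                          nlinarith [abs_nonneg (ρ * w n x)]
                      _ = (ρ * w n x) ^ 2 := sq_abs _
                      _ = ρ ^ 2 * w n x ^ 2 := by ring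
                  · rw [if_neg h, ENNReal.ofReal_zero]
                    exact zero_le
                _ = C * ∫⁻ x, ENNReal.ofReal (w n x ^ 2) :=
                  lintegral_const_mul' _ _ hCfin
  -- identification of the L² quantity
  have hT : ∀ n, (∫⁻ x, ENNReal.ofReal (w n x ^ 2)) =
      (eLpNorm (conv (φ n) G) 2 volume) ^ (2 : ℕ) := by
    intro n
    have e1 : (∫⁻ x, ENNReal.ofReal (w n x ^ 2)) =
        ∫⁻ x, (‖w n x‖₊ : ℝ≥0∞) ^ (2:ℝ) := by
      refine lintegral_congr fun x => ?_
      rw [← enorm_eq_nnnorm, Real.enorm_eq_ofReal_abs,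
        show (2:ℝ) = ((2:ℕ):ℝ) from by norm_num,
        ENNReal.rpow_natCast, ← ENNReal.ofReal_pow (abs_nonneg _), sq_abs]
    have e2 : ∫⁻ x, (‖w n x‖₊ : ℝ≥0∞) ^ (2:ℝ) = eLpNorm' (w n) 2 volume ^ (2:ℝ) :=
      lintegral_rpow_enorm_eq_rpow_eLpNorm' (f := w n) (μ := volume) (by norm_num : (0:ℝ) < 2)
    have e3 : eLpNorm (w n) 2 volume = eLpNorm' (w n) 2 volume := by
      rw [eLpNorm_eq_eLpNorm' (by norm_num) (by norm_num)]
      norm_num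
    rw [e1, e2, ← e3, eLpNorm_congr_ae (hweq n)]
    norm_cast
  -- goal rewritten with w
  have hIeq : ∀ n, (∫⁻ x, ∫⁻ ρ, F ρ (conv (φ n) G x) ∂ν) = ∫⁻ x, ∫⁻ ρ, F ρ (w n x) ∂ν :=
    fun n => lintegral_congr_ae ((hweq n).mono fun x hx => by simp only [hx])
  -- the squeeze
  show Tendsto (fun n => ∫⁻ x, ∫⁻ ρ, F ρ (conv (φ n) G x) ∂ν) atTop (𝓝 0)
  have hb : Tendsto (fun n => ENNReal.ofReal (M n) * K +
      C * (eLpNorm (conv (φ n) G) 2 volume) ^ (2 : ℕ)) atTop (𝓝 0) := by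
    have t1 : Tendsto (fun n => ENNReal.ofReal (M n) * K) atTop (𝓝 0) := by
      have h0 : Tendsto (fun n => ENNReal.ofReal (M n)) atTop (𝓝 0) := by
        have := ENNReal.tendsto_ofReal hφ0
        simpa using this
      simpa using ENNReal.Tendsto.mul_const h0 (Or.inr hKfin)
    have t2 : Tendsto (fun n => C * (eLpNorm (conv (φ n) G) 2 volume) ^ (2 : ℕ))
        atTop (𝓝 0) := by
      have h0 : Tendsto (fun n => (eLpNorm (conv (φ n) G) 2 volume) ^ (2 : ℕ))
          atTop (𝓝 0) := by
        have := ((ENNReal.continuous_pow 2).tendsto 0).comp hL2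
        rw [show (0:ℝ≥0∞) = 0 ^ 2 by norm_num]
        exact this
      simpa using ENNReal.Tendsto.const_mul h0 (Or.inr hCfin)
    simpa using t1.add t2
  have hev : ∀ᶠ n in atTop, M n ≤ 1 := hφ0.eventually (eventually_le_nhds (by norm_num))
  refine tendsto_of_tendsto_of_tendsto_of_le_of_le' tendsto_const_nhds hb
    (.of_forall fun n => zero_le) ?_
  refine hev.mono fun n hn => ?_
  rw [hIeq n, ← hT n]
  exact main n hn
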